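/- Let a(t) ≤ b(t) ≤ c(t) solve a' = a² + bc, b' = b² + ac, c' = c² + ab on [0,T) with S := 2(a+b+c) > 0, and λ_− := (a+b+c)/3 − (√2/3)√(3(a²+b²+c²)−(a+b+c)²). Then λ_−/S is monotone non-decreasing in t. -/

import Mathlib

lemma key16 (a b c : ℝ) :
    0 ≤ 2 * ((a^2+b*c) + (b^2+a*c) + (c^2+a*b)) * (3*(a^2+b^2+c^2) - (a+b+c)^2)
      - (a+b+c) * (3*(2*a*(a^2+b*c) + 2*b*(b^2+a*c) + 2*c*(c^2+a*b))
          - 2*(a+b+c)*((a^2+b*c) + (b^2+a*c) + (c^2+a*b))) := by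
  by_cases h : b - a = 0 ∧ c - b = 0
  · obtain ⟨h1, h2⟩ := h
    have hb : b = a := by linarith
    have hc : c = b := by linarith
    subst hb; subst hc; nlinarith []
  · have hpos : 0 < (b-a)^2 + (b-a)*(c-b) + (c-b)^2 := by
      rcases not_and_or.mp h with h' | h'
      · nlinarith [sq_pos_of_ne_zero h', sq_nonneg ((b-a) + (c-b)), sq_nonneg (c-b)]
      · nlinarith [sq_pos_of_ne_zero h', sq_nonneg ((b-a) + (c-b)), sq_nonneg (b-a)]
    have hid : 3*((b-a)^2+(b-a)*(c-b)+(c-b)^2) *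
        (2 * ((a^2+b*c) + (b^2+a*c) + (c^2+a*b)) * (3*(a^2+b^2+c^2) - (a+b+c)^2)
          - (a+b+c) * (3*(2*a*(a^2+b*c) + 2*b*(b^2+a*c) + 2*c*(c^2+a*b))
              - 2*(a+b+c)*((a^2+b*c) + (b^2+a*c) + (c^2+a*b))))
        = (2*((b-a)^2+(b-a)*(c-b)+(c-b)^2)*(a+b+c)
            + ((b-a)-(c-b))*(2*(b-a)+(c-b))*((b-a)+2*(c-b)))^2
          + 27*((b-a)*(c-b)*((b-a)+(c-b)))^2 := by ring
    nlinarith [hid, hpos, sq_nonneg (2*((b-a)^2+(b-a)*(c-b)+(c-b)^2)*(a+b+c)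
            + ((b-a)-(c-b))*(2*(b-a)+(c-b))*((b-a)+2*(c-b))),
      sq_nonneg ((b-a)*(c-b)*((b-a)+(c-b)))]

noncomputable def g16 (a b c : ℝ → ℝ) : ℝ → ℝ := fun t =>
  (3*((a t)^2 + (b t)^2 + (c t)^2) - (a t + b t + c t)^2) / (a t + b t + c t)^2

noncomputable def g16' (a b c : ℝ → ℝ) : ℝ → ℝ := fun t =>
  ((3*(2 * a t * ((a t)^2 + b t * c t) + 2 * b t * ((b t)^2 + a t * c t)
        + 2 * c t * ((c t)^2 + a t * b t))
      - 2 * (a t + b t + c t) * (((a t)^2 + b t * c t) + ((b t)^2 + a t * c t)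
        + ((c t)^2 + a t * b t)))
    * (a t + b t + c t)^2
  - (3*((a t)^2 + (b t)^2 + (c t)^2) - (a t + b t + c t)^2)
    * (2 * (a t + b t + c t) ^ 1 * (((a t)^2 + b t * c t) + ((b t)^2 + a t * c t)
        + ((c t)^2 + a t * b t))))
  / ((a t + b t + c t)^2)^2

theorem stmt16 (a b c : ℝ → ℝ) (T : ℝ)
    (ha : ∀ t ∈ Set.Ico (0:ℝ) T, HasDerivAt a ((a t)^2 + b t * c t) t)
    (hb : ∀ t ∈ Set.Ico (0:ℝ) T, HasDerivAt b ((b t)^2 + a t * c t) t)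
    (hc : ∀ t ∈ Set.Ico (0:ℝ) T, HasDerivAt c ((c t)^2 + a t * b t) t)
    (hord : ∀ t ∈ Set.Ico (0:ℝ) T, a t ≤ b t ∧ b t ≤ c t)
    (hS : ∀ t ∈ Set.Ico (0:ℝ) T, 0 < 2 * (a t + b t + c t)) :
    ∀ s ∈ Set.Ico (0:ℝ) T, ∀ t ∈ Set.Ico (0:ℝ) T, s ≤ t →
      ((a s + b s + c s) / 3
          - Real.sqrt 2 / 3
            * Real.sqrt (3 * ((a s)^2 + (b s)^2 + (c s)^2) - (a s + b s + c s)^2))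
        / (2 * (a s + b s + c s))
      ≤ ((a t + b t + c t) / 3
          - Real.sqrt 2 / 3
            * Real.sqrt (3 * ((a t)^2 + (b t)^2 + (c t)^2) - (a t + b t + c t)^2))
        / (2 * (a t + b t + c t)) := by
  -- positivity of the trace on the interval
  have hσ : ∀ t ∈ Set.Ico (0:ℝ) T, 0 < a t + b t + c t := fun t ht => by
    linarith [hS t ht]
  -- the function g16 has derivative g16' on the interval
  have hderiv : ∀ t ∈ Set.Ico (0:ℝ) T, HasDerivAt (g16 a b c) (g16' a b c t) t := by
    intro t ht
    have hat := ha t ht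
    have hbt := hb t ht
    have hct := hc t ht
    have hs : HasDerivAt (fun t => a t + b t + c t)
        (((a t)^2 + b t * c t) + ((b t)^2 + a t * c t) + ((c t)^2 + a t * b t)) t :=
      (hat.add hbt).add hct
    have hs2 : HasDerivAt (fun t => (a t + b t + c t)^2)
        (2 * (a t + b t + c t) ^ 1 * (((a t)^2 + b t * c t) + ((b t)^2 + a t * c t)
          + ((c t)^2 + a t * b t))) t := hs.pow 2
    have hnum : HasDerivAt (fun t => 3*((a t)^2 + (b t)^2 + (c t)^2) - (a t + b t + c t)^2)
        (3*(2 * a t * ((a t)^2 + b t * c t) + 2 * b t * ((b t)^2 + a t * c t)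
            + 2 * c t * ((c t)^2 + a t * b t))
          - 2 * (a t + b t + c t) ^ 1 * (((a t)^2 + b t * c t) + ((b t)^2 + a t * c t)
            + ((c t)^2 + a t * b t))) t := by
      have h1 : HasDerivAt (fun t => (a t)^2 + (b t)^2 + (c t)^2)
          (2 * a t ^ 1 * ((a t)^2 + b t * c t) + 2 * b t ^ 1 * ((b t)^2 + a t * c t)
            + 2 * c t ^ 1 * ((c t)^2 + a t * b t)) t :=
        ((hat.pow 2).add (hbt.pow 2)).add (hct.pow 2)
      have h2 := (h1.const_mul 3).sub hs2
      exact h2.congr_deriv (by ring)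
    have hne : (a t + b t + c t)^2 ≠ 0 := pow_ne_zero 2 (hσ t ht).ne'
    have := hnum.div hs2 hne
    exact this.congr_deriv (by unfold g16'; ring)
  -- g16' is nonpositive on the interval
  have hnonpos : ∀ t ∈ Set.Ico (0:ℝ) T, g16' a b c t ≤ 0 := by
    intro t ht
    have hσt := hσ t ht
    have hK := key16 (a t) (b t) (c t)
    apply div_nonpos_of_nonpos_of_nonneg
    · nlinarith [mul_nonneg hσt.le hK]
    · positivity
  -- g16 is antitone on the interval
  have hanti : AntitoneOn (g16 a b c) (Set.Ico (0:ℝ) T) := by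
    apply antitoneOn_of_hasDerivWithinAt_nonpos (convex_Ico 0 T)
      (f' := g16' a b c)
    · exact fun t ht => ((hderiv t ht).continuousAt).continuousWithinAt
    · intro t ht
      rw [interior_Ico] at ht
      exact ((hderiv t (Set.Ioo_subset_Ico_self ht)).hasDerivWithinAt)
    · intro t ht
      rw [interior_Ico] at ht
      exact hnonpos t (Set.Ioo_subset_Ico_self ht)
  -- rewriting the quantity in terms of g16
  have hconv : ∀ r ∈ Set.Ico (0:ℝ) T,
      ((a r + b r + c r) / 3
          - Real.sqrt 2 / 3
            * Real.sqrt (3 * ((a r)^2 + (b r)^2 + (c r)^2) - (a r + b r + c r)^2))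
        / (2 * (a r + b r + c r))
      = 1/6 - Real.sqrt 2 / 6 * Real.sqrt (g16 a b c r) := by
    intro r hr
    have hσr := hσ r hr
    have hQ : 0 ≤ 3 * ((a r)^2 + (b r)^2 + (c r)^2) - (a r + b r + c r)^2 := by
      nlinarith [sq_nonneg (a r - b r), sq_nonneg (b r - c r), sq_nonneg (a r - c r)]
    rw [g16, Real.sqrt_div hQ, Real.sqrt_sq hσr.le]
    have key : ∀ x σ : ℝ, σ ≠ 0 →
        (σ/3 - Real.sqrt 2/3 * x)/(2*σ) = 1/6 - Real.sqrt 2/6 * (x/σ) := by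
      intro x σ hσ'
      field_simp
      ring_nf
    exact key _ _ hσr.ne'
  intro s hs t ht hst
  rw [hconv s hs, hconv t ht]
  have hg : g16 a b c t ≤ g16 a b c s := hanti hs ht hst
  have hsq : Real.sqrt (g16 a b c t) ≤ Real.sqrt (g16 a b c s) := Real.sqrt_le_sqrt hg
  have h2 : (0:ℝ) ≤ Real.sqrt 2 / 6 := by positivity
  nlinarith [mul_le_mul_of_nonneg_left hsq h2]
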